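/- Let F be a real Banach space, λ₀ ∈ ℝ, M ∈ (0,∞), and let (G_λ)_{λ>λ₀} be a pseudo-resolvent on F such that ‖λ G_λ f‖ ≤ M‖f‖ for all λ > λ₀ and all f ∈ F. Then the set of strong continuity F_G := {f ∈ F : ‖λ G_λ f − f‖ → 0 as λ → ∞} is a closed linear subspace of F and, for every μ > λ₀, F_G equals the norm closure of the range G_μ(F). -/

import Mathlib

open Filter Topology

/-- Let `F` be a real Banach space, `λ₀ ∈ ℝ`, `M ∈ (0,∞)`, and let
`(G_λ)_{λ>λ₀}` be a pseudo-resolvent on `F` (i.e. `G_λ - G_μ = (μ - λ) G_μ G_λ` for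
`λ, μ > λ₀`) such that `‖λ G_λ f‖ ≤ M ‖f‖` for all `λ > λ₀` and `f ∈ F`.  Then the set
of strong continuity `F_G := {f : λ G_λ f → f as λ → ∞}` is a closed linear subspace
of `F`, and for every `μ > λ₀` it equals the norm closure of the range of `G_μ`. -/
theorem pseudoResolvent_strong_continuity_set_eq_closure_range
    {F : Type*} [NormedAddCommGroup F] [NormedSpace ℝ F] [CompleteSpace F]
    (lam₀ M : ℝ) (hM : 0 < M) (G : ℝ → F →L[ℝ] F)
    (hres : ∀ lam mu : ℝ, lam₀ < lam → lam₀ < mu →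
      G lam - G mu = (mu - lam) • ((G mu).comp (G lam)))
    (hbdd : ∀ lam : ℝ, lam₀ < lam → ∀ f : F, ‖lam • G lam f‖ ≤ M * ‖f‖) :
    IsClosed {f : F | Tendsto (fun lam : ℝ => lam • G lam f) atTop (𝓝 f)} ∧
    (∀ f g : F,
        f ∈ {f : F | Tendsto (fun lam : ℝ => lam • G lam f) atTop (𝓝 f)} →
        g ∈ {f : F | Tendsto (fun lam : ℝ => lam • G lam f) atTop (𝓝 f)} →
        f + g ∈ {f : F | Tendsto (fun lam : ℝ => lam • G lam f) atTop (𝓝 f)}) ∧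
    (∀ (c : ℝ) (f : F),
        f ∈ {f : F | Tendsto (fun lam : ℝ => lam • G lam f) atTop (𝓝 f)} →
        c • f ∈ {f : F | Tendsto (fun lam : ℝ => lam • G lam f) atTop (𝓝 f)}) ∧
    (∀ mu : ℝ, lam₀ < mu →
        {f : F | Tendsto (fun lam : ℝ => lam • G lam f) atTop (𝓝 f)} =
          closure (Set.range (G mu))) := by

  have hclosed : IsClosed {f : F | Tendsto (fun lam : ℝ => lam • G lam f) atTop (𝓝 f)} := by
    refine isClosed_of_closure_subset ?_
    intro f hf
    rw [Metric.mem_closure_iff] at hf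
    rw [Set.mem_setOf_eq, Metric.tendsto_atTop]
    intro ε hε
    obtain ⟨g, hgS, hgd⟩ := hf (ε / (3 * (M + 1))) (by positivity)
    rw [Set.mem_setOf_eq, Metric.tendsto_atTop] at hgS
    obtain ⟨N, hN⟩ := hgS (ε / 3) (by positivity)
    refine ⟨max N (lam₀ + 1), fun lam hlam => ?_⟩
    have hlam₀ : lam₀ < lam := lt_of_lt_of_le (by linarith) (le_trans (le_max_right _ _) hlam)
    have hNl : N ≤ lam := le_trans (le_max_left _ _) hlam
    have h1 : dist (lam • G lam f) (lam • G lam g) ≤ M * dist f g := by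
      rw [dist_eq_norm, dist_eq_norm, ← smul_sub, ← map_sub]
      exact hbdd lam hlam₀ (f - g)
    have h2 : dist (lam • G lam g) g < ε / 3 := hN lam hNl
    have hdfg : dist f g < ε / (3 * (M + 1)) := hgd
    have hM1 : (M + 1) * dist f g < ε / 3 := by
      rw [div_mul_eq_div_div] at hdfg
      have := (lt_div_iff₀ (by positivity : (0:ℝ) < M + 1)).mp hdfg
      linarith [mul_comm (M + 1) (dist f g)]
    calc dist (lam • G lam f) f
        ≤ dist (lam • G lam f) (lam • G lam g) + dist (lam • G lam g) g + dist g f :=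
          dist_triangle4 _ _ _ _
      _ ≤ M * dist f g + dist (lam • G lam g) g + dist f g := by
          rw [dist_comm g f]; linarith
      _ < ε := by
          have hd0 : 0 ≤ dist f g := dist_nonneg
          nlinarith
  refine ⟨hclosed, ?_, ?_, ?_⟩
  · intro f g hf hg
    have : (fun lam : ℝ => lam • G lam (f + g))
        = fun lam : ℝ => lam • G lam f + lam • G lam g := by
      funext lam; rw [map_add, smul_add]
    rw [Set.mem_setOf_eq, this]
    exact hf.add hg
  · intro c f hf
    have : (fun lam : ℝ => lam • G lam (c • f))
        = fun lam : ℝ => c • (lam • G lam f) := by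
      funext lam; rw [map_smul, smul_comm]
    rw [Set.mem_setOf_eq, this]
    exact hf.const_smul c
  · intro mu hmu
    -- range G lam ⊆ range G mu for all lam > lam₀
    have hrange : ∀ lam : ℝ, lam₀ < lam → Set.range (G lam) ⊆ Set.range (G mu) := by
      rintro lam hlam _ ⟨x, rfl⟩
      refine ⟨x + (mu - lam) • G lam x, ?_⟩
      have h := congrArg (fun T : F →L[ℝ] F => T x) (hres lam mu hlam hmu)
      simp only [ContinuousLinearMap.sub_apply, ContinuousLinearMap.smul_apply,
        ContinuousLinearMap.coe_comp', Function.comp_apply] at h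
      rw [map_add, map_smul]
      have : (mu - lam) • G mu (G lam x) = G lam x - G mu x := h.symm
      rw [this]; abel
    -- range G mu ⊆ S
    have hrangeS : ∀ g : F,
        Tendsto (fun lam : ℝ => lam • G lam (G mu g)) atTop (𝓝 (G mu g)) := by
      intro g
      have hinv : Tendsto (fun lam : ℝ => (lam - mu)⁻¹) atTop (𝓝 0) :=
        (tendsto_atTop_add_const_right _ (-mu) tendsto_id).inv_tendsto_atTop
      have hquot : Tendsto (fun lam : ℝ => lam * (lam - mu)⁻¹) atTop (𝓝 1) := by
        have h1 : Tendsto (fun lam : ℝ => 1 + mu * (lam - mu)⁻¹) atTop (𝓝 1) := by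
          have := (hinv.const_mul mu).const_add 1
          simpa using this
        refine h1.congr' ?_
        filter_upwards [eventually_gt_atTop mu] with lam hl
        have hne : lam - mu ≠ 0 := by linarith
        field_simp
        ring
      have hA : Tendsto (fun lam : ℝ => (lam * (lam - mu)⁻¹) • G mu g) atTop
          (𝓝 (G mu g)) := by
        have := hquot.smul_const (G mu g)
        simpa using this
      have hB : Tendsto (fun lam : ℝ => (lam - mu)⁻¹ • (lam • G lam g)) atTop (𝓝 0) := by
        have hbound : Tendsto (fun lam : ℝ => (lam - mu)⁻¹ * (M * ‖g‖)) atTop (𝓝 0) := by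
          have := hinv.mul_const (M * ‖g‖)
          simpa using this
        refine squeeze_zero_norm' ?_ hbound
        filter_upwards [eventually_gt_atTop (max lam₀ mu)] with lam hl
        have hlam₀ : lam₀ < lam := lt_of_le_of_lt (le_max_left _ _) hl
        have hlmu : mu < lam := lt_of_le_of_lt (le_max_right _ _) hl
        have hip : (0:ℝ) < (lam - mu)⁻¹ := inv_pos.mpr (by linarith)
        rw [norm_smul, Real.norm_eq_abs, abs_of_pos hip]
        exact mul_le_mul_of_nonneg_left (hbdd lam hlam₀ g) hip.le
      have hAB : Tendsto (fun lam : ℝ =>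
          (lam * (lam - mu)⁻¹) • G mu g - (lam - mu)⁻¹ • (lam • G lam g)) atTop
          (𝓝 (G mu g)) := by
        have := hA.sub hB
        simpa using this
      refine hAB.congr' ?_
      filter_upwards [eventually_gt_atTop (max lam₀ mu)] with lam hl
      have hlam₀ : lam₀ < lam := lt_of_le_of_lt (le_max_left _ _) hl
      have hlmu : mu < lam := lt_of_le_of_lt (le_max_right _ _) hl
      have hne : lam - mu ≠ 0 := by linarith
      have h := congrArg (fun T : F →L[ℝ] F => T g) (hres mu lam hmu hlam₀)
      simp only [ContinuousLinearMap.sub_apply, ContinuousLinearMap.smul_apply,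
        ContinuousLinearMap.coe_comp', Function.comp_apply] at h
      -- h : G mu g - G lam g = (lam - mu) • G lam (G mu g)
      have hkey : G lam (G mu g) = (lam - mu)⁻¹ • (G mu g - G lam g) := by
        rw [h, smul_smul, inv_mul_cancel₀ hne, one_smul]
      rw [hkey]
      module
    -- conclude equality
    apply Set.eq_of_subset_of_subset
    · intro f hf
      rw [Set.mem_setOf_eq] at hf
      refine mem_closure_of_tendsto hf ?_
      filter_upwards [eventually_gt_atTop lam₀] with lam hlam
      have : lam • G lam f = G lam (lam • f) := (map_smul (G lam) lam f).symm
      rw [this]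
      exact hrange lam hlam ⟨lam • f, rfl⟩
    · refine closure_minimal ?_ hclosed
      rintro _ ⟨g, rfl⟩
      exact hrangeS g
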